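/- Let p be an odd prime, F = Z/pZ, and let G = ⟨{a} ∪ {b^(j)_i}⟩ ∈ 𝒞 be a just infinite generalised multi-edge spinal group in standard form, and suppose that for b = b^(1)_1 the subgroup ⟨a, b⟩ is a generalised Gupta–Sidki group, i.e. ψ₁(b) = (a^{e₁},…,a^{e_{p−1}}, b) with {e₁,…,e_{p−1}} = {1,2,…,p−1} as subsets of Z/pZ. Then, identifying group elements with their images in the tree enveloping algebra 𝔄_G, the element 1 + b·a_* is not invertible in 𝔄_G, where a_* = (a−1)^{p−1} = 1 + a + ⋯ + a^{p−1}. -/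

import Mathlib

set_option synthInstance.maxHeartbeats 1000000
set_option maxHeartbeats 1000000

namespace GMS

abbrev Vtx (p : ℕ) := List (Fin p)

def applyP {p : ℕ} : (Vtx p → Equiv.Perm (Fin p)) → Vtx p → Vtx p
  | _, [] => []
  | f, x :: ω => f [] x :: applyP (fun τ => f (x :: τ)) ω

def invApplyP {p : ℕ} : (Vtx p → Equiv.Perm (Fin p)) → Vtx p → Vtx p
  | _, [] => []
  | f, y :: ω => (f []).symm y :: invApplyP (fun τ => f ((f []).symm y :: τ)) ω

theorem applyP_invApplyP {p : ℕ} (f : Vtx p → Equiv.Perm (Fin p)) (ω : Vtx p) :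
    applyP f (invApplyP f ω) = ω := by
  induction ω generalizing f with
  | nil => rfl
  | cons y ω ih => simp [applyP, invApplyP, ih]

theorem invApplyP_applyP {p : ℕ} (f : Vtx p → Equiv.Perm (Fin p)) (ω : Vtx p) :
    invApplyP f (applyP f ω) = ω := by
  induction ω generalizing f with
  | nil => rfl
  | cons x ω ih => simp [applyP, invApplyP, ih]

def toPerm {p : ℕ} (f : Vtx p → Equiv.Perm (Fin p)) : Equiv.Perm (Vtx p) :=
  ⟨applyP f, invApplyP f, invApplyP_applyP f, applyP_invApplyP f⟩

def treeAut (p : ℕ) : Subgroup (Equiv.Perm (Vtx p)) where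
  carrier := {f | ∀ ω ω' : Vtx p, ω <+: ω' → f ω <+: f ω' ∧ f.symm ω <+: f.symm ω'}
  one_mem' := fun _ _ h => ⟨h, h⟩
  mul_mem' := by
    intro f g hf hg ω ω' h
    exact ⟨(hf _ _ (hg _ _ h).1).1, (hg _ _ (hf _ _ h).2).2⟩
  inv_mem' := by
    intro f hf ω ω' h
    exact ⟨(hf _ _ h).2, (hf _ _ h).1⟩

theorem applyP_append {p : ℕ} (f : Vtx p → Equiv.Perm (Fin p)) (ω t : Vtx p) :
    applyP f (ω ++ t) = applyP f ω ++ applyP (fun τ => f (ω ++ τ)) t := by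
  induction ω generalizing f with
  | nil => rfl
  | cons x ω ih => simp [applyP, ih]

theorem invApplyP_append {p : ℕ} (f : Vtx p → Equiv.Perm (Fin p)) (ω t : Vtx p) :
    invApplyP f (ω ++ t) =
      invApplyP f ω ++ invApplyP (fun τ => f (invApplyP f ω ++ τ)) t := by
  induction ω generalizing f with
  | nil => rfl
  | cons x ω ih => simp [invApplyP, ih]

theorem toPerm_mem_treeAut {p : ℕ} (f : Vtx p → Equiv.Perm (Fin p)) :
    toPerm f ∈ treeAut p := by
  intro ω ω' h
  obtain ⟨t, rfl⟩ := h
  exact ⟨⟨_, (applyP_append f ω t).symm⟩, ⟨_, (invApplyP_append f ω t).symm⟩⟩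

/-- The `p`-cycle `x ↦ x + 1` on `Fin p`. -/
def rootCycle (p : ℕ) [NeZero p] : Equiv.Perm (Fin p) := Equiv.addRight 1

/-- The rooted automorphism `a`, cyclically permuting the first-level subtrees. -/
def aAut (p : ℕ) [NeZero p] : Equiv.Perm (Vtx p) :=
  toPerm (fun ω => if ω = [] then rootCycle p else 1)

/-- Conversion of a non-zero residue position to an index in `Fin (p-1)`. -/
def offIdx {p : ℕ} (hp1 : 1 < p) (k : Fin p) : Fin (p - 1) :=
  ⟨k.val - 1, by have := k.isLt; omega⟩

/-- The portrait of a directed automorphism with directing path `c, cc, ccc, …` and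
defining vector `e`: its section at the first-level vertex `c` is itself, and its
section at a first-level vertex `c + k` (for `k ≠ 0`) is `a^{e_k}`. -/
def dirPort {p : ℕ} [NeZero p] (hp1 : 1 < p) (c : Fin p) (e : Fin (p - 1) → ZMod p) :
    Vtx p → Equiv.Perm (Fin p)
  | [] => 1
  | [x] => if x = c then 1 else rootCycle p ^ (e (offIdx hp1 (x - c))).val
  | x :: y :: ω => if x = c then dirPort hp1 c e (y :: ω) else 1

/-- The directed automorphism with directing path `c, cc, ccc, …` and defining
vector `e`; it satisfies `ψ₁(b) = (…, a^{e_k} at position c + k, …, b at position c, …)`. -/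
def dirAut {p : ℕ} [NeZero p] (hp1 : 1 < p) (c : Fin p) (e : Fin (p - 1) → ZMod p) :
    Equiv.Perm (Vtx p) :=
  toPerm (dirPort hp1 c e)

/-- Defining data for a generalised multi-edge spinal group in standard form:
for each `j`, an `r j`-tuple of linearly independent defining vectors in `(ℤ/pℤ)^{p-1}`. -/
structure SpinalData (p : ℕ) where
  r : Fin p → ℕ
  r_le : ∀ j, r j ≤ p - 1
  r_ne : ∃ j, r j ≠ 0
  e : (j : Fin p) → Fin (r j) → Fin (p - 1) → ZMod p
  indep : ∀ j, LinearIndependent (ZMod p) (e j)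

/-- The directing-path letter of the `j`-th family (`j` is 0-indexed; the paper's
family `j+1` is directed along the constant path with letter `p - j - 1`). -/
def pathLetter {p : ℕ} [NeZero p] (j : Fin p) : Fin p := -(j + 1)

/-- The directed generator `b^{(j)}_i`. -/
def SpinalData.gen {p : ℕ} [NeZero p] (D : SpinalData p) (hp1 : 1 < p)
    (j : Fin p) (i : Fin (D.r j)) : Equiv.Perm (Vtx p) :=
  dirAut hp1 (pathLetter j) (D.e j i)

/-- The generating set `{a} ∪ {b^{(j)}_i}`. -/
def SpinalData.genSet {p : ℕ} [NeZero p] (D : SpinalData p) (hp1 : 1 < p) :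
    Set (Equiv.Perm (Vtx p)) :=
  insert (aAut p) {g | ∃ j i, g = D.gen hp1 j i}

/-- The generalised multi-edge spinal group in standard form associated to `D`. -/
def SpinalData.grp {p : ℕ} [NeZero p] (D : SpinalData p) (hp1 : 1 < p) :
    Subgroup (Equiv.Perm (Vtx p)) :=
  Subgroup.closure (D.genSet hp1)

theorem aAut_mem_grp {p : ℕ} [NeZero p] (D : SpinalData p) (hp1 : 1 < p) :
    aAut p ∈ D.grp hp1 :=
  Subgroup.subset_closure (Set.mem_insert _ _)

theorem gen_mem_grp {p : ℕ} [NeZero p] (D : SpinalData p) (hp1 : 1 < p)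
    (j : Fin p) (i : Fin (D.r j)) : D.gen hp1 j i ∈ D.grp hp1 :=
  Subgroup.subset_closure (Set.mem_insert_iff.mpr (Or.inr ⟨j, i, rfl⟩))

/-- `ψ₁(g) = (s 0, …, s (p-1))`: the element `g` stabilises the first level and has
section `s x` at the first-level vertex `x`. -/
def hasSections {p : ℕ} (g : Equiv.Perm (Vtx p)) (s : Fin p → Equiv.Perm (Vtx p)) : Prop :=
  ∀ (x : Fin p) (τ : Vtx p), g (x :: τ) = x :: s x τ

/-- `g` fixes the vertex `u` and acts on the subtree rooted at `u` as `s` (under the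
natural identification of the subtree with the whole tree). -/
def sectionAt {p : ℕ} (u : Vtx p) (g s : Equiv.Perm (Vtx p)) : Prop :=
  ∀ τ : Vtx p, g (u ++ τ) = u ++ s τ

/-- The pointwise stabiliser of the `n`-th level of the tree. -/
def levelStab (p : ℕ) (n : ℕ) : Subgroup (Equiv.Perm (Vtx p)) where
  carrier := {g | ∀ ω : Vtx p, ω.length = n → g ω = ω}
  one_mem' := fun _ _ => rfl
  mul_mem' := by
    intro f g hf hg ω hω
    have := hg ω hω
    simp only [Equiv.Perm.mul_apply, this]
    exact hf ω hω
  inv_mem' := by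
    intro f hf ω hω
    have := hf ω hω
    calc f⁻¹ ω = f⁻¹ (f ω) := by rw [this]
    _ = ω := f.symm_apply_apply ω

/-- Spherical transitivity: `G` acts transitively on every level of the tree. -/
def SphericallyTransitive (p : ℕ) (G : Subgroup (Equiv.Perm (Vtx p))) : Prop :=
  ∀ ω ω' : Vtx p, ω.length = ω'.length → ∃ g ∈ G, g ω = ω'

/-- `G` is fractal: it is spherically transitive and for every vertex `u`, the
restriction to the subtree rooted at `u` of the stabiliser of `u` in `G` is `G` itself. -/
def Fractal (p : ℕ) (G : Subgroup (Equiv.Perm (Vtx p))) : Prop :=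
  SphericallyTransitive p G ∧
    ∀ (u : Vtx p) (s : Equiv.Perm (Vtx p)), s ∈ G ↔ ∃ g ∈ G, sectionAt u g s

/-- `G` is regular branch over `K`: `G` is fractal, `K` is a non-trivial subgroup of
`Stab_G(1)` of finite index in `G`, and `K × ⋯ × K ⊆ ψ₁(K)`. -/
def RegularBranch (p : ℕ) (G K : Subgroup (Equiv.Perm (Vtx p))) : Prop :=
  Fractal p G ∧ K ≠ ⊥ ∧ K ≤ G ⊓ levelStab p 1 ∧ K.relIndex G ≠ 0 ∧
    ∀ s : Fin p → Equiv.Perm (Vtx p), (∀ x, s x ∈ K) → ∃ g ∈ K, hasSections g s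

/-- The third term `γ₃(H) = [[H,H],H]` of the lower central series. -/
def gamma3 {Γ : Type*} [Group Γ] (H : Subgroup Γ) : Subgroup Γ := ⁅(⁅H, H⁆ : Subgroup Γ), H⁆

/-- Rigid stabiliser (in the full permutation group) of the vertex `u`: permutations
fixing every vertex not having `u` as a prefix. -/
def rigidStab (p : ℕ) (u : Vtx p) : Subgroup (Equiv.Perm (Vtx p)) where
  carrier := {g | ∀ ω : Vtx p, ¬ u <+: ω → g ω = ω}
  one_mem' := fun _ _ => rfl
  mul_mem' := by
    intro f g hf hg ω hω
    have := hg ω hω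
    simp only [Equiv.Perm.mul_apply, this]
    exact hf ω hω
  inv_mem' := by
    intro f hf ω hω
    have := hf ω hω
    calc f⁻¹ ω = f⁻¹ (f ω) := by rw [this]
    _ = ω := f.symm_apply_apply ω

/-- The rigid `n`-th level stabiliser of `G`: the subgroup generated by (equivalently,
the product of) the rigid vertex stabilisers of the vertices at level `n`. -/
def rigidLevelStab (p : ℕ) (G : Subgroup (Equiv.Perm (Vtx p))) (n : ℕ) :
    Subgroup (Equiv.Perm (Vtx p)) :=
  ⨆ u ∈ {u : Vtx p | u.length = n}, (G ⊓ rigidStab p u)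

/-- `G` is a branch group (with respect to its action on the regular rooted tree). -/
def Branch (p : ℕ) (G : Subgroup (Equiv.Perm (Vtx p))) : Prop :=
  SphericallyTransitive p G ∧ ∀ n : ℕ, (rigidLevelStab p G n).relIndex G ≠ 0

/-- An infinite group all of whose proper quotients are finite. -/
def JustInfinite {Γ : Type*} [Group Γ] (G : Subgroup Γ) : Prop :=
  (G : Set Γ).Infinite ∧
    ∀ N : Subgroup ↥G, N.Normal → N ≠ ⊥ → N.FiniteIndex

/-- The conjugate subgroup `x H x⁻¹`. -/
def conjSub {Γ : Type*} [Group Γ] (x : Γ) (H : Subgroup Γ) : Subgroup Γ :=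
  H.map (MulAut.conj x).toMonoidHom

/-- `M` is a dense subgroup of `G` with respect to the profinite topology on `G`:
`NM = G` for every normal subgroup `N` of `G` of finite index. -/
def DenseIn {Γ : Type*} [Group Γ] (M G : Subgroup Γ) : Prop :=
  M ≤ G ∧ ∀ N : Subgroup Γ, N ≤ G → (N.subgroupOf G).Normal → N.relIndex G ≠ 0 →
    G ≤ N ⊔ M

/-- The restriction to the subtree rooted at `u` of the stabiliser of `u` in `M`
(the "upper companion" subgroup `M_u`), under the identification of the subtree with
the whole tree. -/
def restrAt (p : ℕ) (u : Vtx p) (M : Subgroup (Equiv.Perm (Vtx p))) :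
    Subgroup (Equiv.Perm (Vtx p)) where
  carrier := {s | ∃ g ∈ M, sectionAt u g s}
  one_mem' := ⟨1, M.one_mem, fun τ => rfl⟩
  mul_mem' := by
    rintro s s' ⟨g, hg, hgs⟩ ⟨g', hg', hgs'⟩
    refine ⟨g * g', M.mul_mem hg hg', fun τ => ?_⟩
    simp only [Equiv.Perm.mul_apply, hgs' τ, hgs (s' τ)]
  inv_mem' := by
    rintro s ⟨g, hg, hgs⟩
    refine ⟨g⁻¹, M.inv_mem hg, fun τ => ?_⟩
    have h1 : g (u ++ s⁻¹ τ) = u ++ τ := by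
      rw [hgs (s⁻¹ τ)]
      simp
    calc g⁻¹ (u ++ τ) = g⁻¹ (g (u ++ s⁻¹ τ)) := by rw [h1]
    _ = u ++ s⁻¹ τ := g.symm_apply_apply _

/-- Index `p - i` (`0`-indexed version of `i ↦ p - i` on `{1, …, p-1}`). -/
def revIdx {p : ℕ} (k : Fin (p - 1)) : Fin (p - 1) :=
  ⟨p - 2 - k.val, by have := k.isLt; omega⟩


/-- Non-constancy of a defining vector. -/
def IsNonConstant {p : ℕ} (v : Fin (p - 1) → ZMod p) : Prop :=
  ¬ ∃ α : ZMod p, ∀ k, v k = α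

/-- The regularity condition defining the subclass `𝒞_reg`: every non-empty family
of defining vectors contains a non-constant vector. -/
def SpinalData.IsReg {p : ℕ} (D : SpinalData p) : Prop :=
  ∀ j, D.r j ≠ 0 → ∃ i, IsNonConstant (D.e j i)

/-- Non-symmetry of a defining vector: `e_i ≠ e_{p-i}` for some `i`. -/
def IsNonSymmetric {p : ℕ} (v : Fin (p - 1) → ZMod p) : Prop :=
  ∃ k, v k ≠ v (revIdx k)

/-- Membership in the class `𝒞`: subgroups of `Aut(T)` conjugate to a generalised
multi-edge spinal group in standard form. -/
def inC (p : ℕ) [NeZero p] (hp1 : 1 < p) (G : Subgroup (Equiv.Perm (Vtx p))) : Prop :=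
  ∃ (D : SpinalData p) (x : Equiv.Perm (Vtx p)), x ∈ treeAut p ∧
    G = (D.grp hp1).map (MulAut.conj x).toMonoidHom

/-- Membership in the subclass `𝒞_reg`. -/
def inCreg (p : ℕ) [NeZero p] (hp1 : 1 < p) (G : Subgroup (Equiv.Perm (Vtx p))) : Prop :=
  ∃ (D : SpinalData p) (x : Equiv.Perm (Vtx p)), x ∈ treeAut p ∧ D.IsReg ∧
    G = (D.grp hp1).map (MulAut.conj x).toMonoidHom

theorem apply_nil_of_mem_treeAut {p : ℕ} {f : Equiv.Perm (Vtx p)} (hf : f ∈ treeAut p) :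
    f [] = [] := by
  have h1 : f [] <+: f (f.symm []) := (hf [] (f.symm []) (List.nil_prefix)).1
  rw [f.apply_symm_apply] at h1
  exact List.prefix_nil.mp h1

theorem length_le_of_mem_treeAut {p : ℕ} {f : Equiv.Perm (Vtx p)} (hf : f ∈ treeAut p)
    (ω : Vtx p) : ω.length ≤ (f ω).length := by
  induction ω using List.reverseRecOn with
  | nil => exact Nat.zero_le _
  | append_singleton ω x ih =>
      have h1 : f ω <+: f (ω ++ [x]) := (hf ω (ω ++ [x]) ⟨[x], rfl⟩).1
      have hne : f ω ≠ f (ω ++ [x]) := by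
        intro h
        have := f.injective h
        simp at this
      have h2 : (f ω).length < (f (ω ++ [x])).length :=
        lt_of_le_of_ne h1.length_le (fun h => hne (h1.eq_of_length h))
      simp only [List.length_append, List.length_singleton]
      omega

theorem length_of_mem_treeAut {p : ℕ} {f : Equiv.Perm (Vtx p)} (hf : f ∈ treeAut p)
    (ω : Vtx p) : (f ω).length = ω.length := by
  have h1 := length_le_of_mem_treeAut hf ω
  have h2 := length_le_of_mem_treeAut ((treeAut p).inv_mem hf) (f ω)
  have h3 : (f⁻¹ : Equiv.Perm (Vtx p)) (f ω) = ω := by simp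
  rw [h3] at h2
  omega

/-- The prefix of length `n` of a boundary point (infinite ray). -/
def rayTake {p : ℕ} (ξ : ℕ → Fin p) (n : ℕ) : Vtx p := List.ofFn (fun i : Fin n => ξ i)

theorem rayTake_succ {p : ℕ} (ξ : ℕ → Fin p) (n : ℕ) :
    rayTake ξ (n + 1) = rayTake ξ n ++ [ξ n] := by
  simp only [rayTake, List.ofFn_succ', List.concat_eq_append, Fin.coe_castSucc,
    Fin.val_last]

/-- The induced action of a tree automorphism on the boundary of the tree. -/
def bAct {p : ℕ} [NeZero p] (g : Equiv.Perm (Vtx p)) (ξ : ℕ → Fin p) : ℕ → Fin p :=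
  fun n => (g (rayTake ξ (n + 1))).getD n 0

theorem bAct_rayTake {p : ℕ} [NeZero p] {f : Equiv.Perm (Vtx p)} (hf : f ∈ treeAut p)
    (ξ : ℕ → Fin p) (n : ℕ) : f (rayTake ξ n) = rayTake (bAct f ξ) n := by
  induction n with
  | zero => exact apply_nil_of_mem_treeAut hf
  | succ n ih =>
      have hpre : f (rayTake ξ n) <+: f (rayTake ξ (n + 1)) := by
        refine (hf _ _ ?_).1
        rw [rayTake_succ]
        exact ⟨[ξ n], rfl⟩
      obtain ⟨t, ht⟩ := hpre
      have hlen : t.length = 1 := by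
        have l1 : (f (rayTake ξ n)).length = n := by
          rw [length_of_mem_treeAut hf]; simp [rayTake]
        have l2 : (f (rayTake ξ (n + 1))).length = n + 1 := by
          rw [length_of_mem_treeAut hf]; simp [rayTake]
        have h3 : (f (rayTake ξ n)).length + t.length = (f (rayTake ξ (n+1))).length := by
          rw [← ht]; simp
        omega
      obtain ⟨y, rfl⟩ : ∃ y, t = [y] := by
        match t, hlen with
        | [y], _ => exact ⟨y, rfl⟩
      have hy : bAct f ξ n = y := by
        unfold bAct
        rw [← ht, ih]
        rw [List.getD_append_right]
        · simp [rayTake]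
        · simp [rayTake]
      rw [rayTake_succ (bAct f ξ) n, ← ht, ih, hy]

theorem bAct_one {p : ℕ} [NeZero p] : bAct (1 : Equiv.Perm (Vtx p)) = id := by
  funext ξ n
  simp only [bAct, Equiv.Perm.coe_one, id_eq]
  rw [List.getD_eq_getElem]
  · simp only [rayTake]
    rw [List.getElem_ofFn]
  · simp [rayTake]

theorem bAct_mul {p : ℕ} [NeZero p] {f g : Equiv.Perm (Vtx p)}
    (_hf : f ∈ treeAut p) (hg : g ∈ treeAut p) :
    bAct (f * g) = bAct f ∘ bAct g := by
  funext ξ n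
  simp only [bAct, Function.comp_apply, Equiv.Perm.mul_apply]
  rw [bAct_rayTake hg]


theorem grp_le_treeAut {p : ℕ} [NeZero p] (D : SpinalData p) (hp1 : 1 < p) :
    D.grp hp1 ≤ treeAut p := by
  rw [SpinalData.grp, Subgroup.closure_le]
  intro g hg
  rcases Set.mem_insert_iff.mp hg with rfl | hh
  · exact toPerm_mem_treeAut _
  · obtain ⟨j, i, rfl⟩ := hh
    exact toPerm_mem_treeAut _

/-- The endomorphism algebra `End(F⟨⟨∂T⟩⟩)` of the `𝔽_p`-vector space with basis the
boundary `∂T` of the tree (the set of infinite rays, identified with `ℕ → Fin p`). -/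
def BEnd (p : ℕ) [NeZero p] : Type :=
  Module.End (ZMod p) ((ℕ → Fin p) →₀ ZMod p)

noncomputable instance (p : ℕ) [NeZero p] : Ring (BEnd p) :=
  inferInstanceAs (Ring (Module.End (ZMod p) ((ℕ → Fin p) →₀ ZMod p)))

noncomputable instance (p : ℕ) [NeZero p] : Algebra (ZMod p) (BEnd p) :=
  inferInstanceAs (Algebra (ZMod p) (Module.End (ZMod p) ((ℕ → Fin p) →₀ ZMod p)))

/-- The action of a group of tree automorphisms on the `𝔽_p`-vector space with basis
the boundary of the tree. -/
noncomputable def traRep (p : ℕ) [NeZero p] (G : Subgroup (Equiv.Perm (Vtx p)))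
    (hG : G ≤ treeAut p) : ↥G →* BEnd p where
  toFun g :=
    (Finsupp.lmapDomain (ZMod p) (ZMod p) (bAct (g : Equiv.Perm (Vtx p))) : BEnd p)
  map_one' := by
    show (Finsupp.lmapDomain (ZMod p) (ZMod p)
        (bAct ((1 : ↥G) : Equiv.Perm (Vtx p))) : BEnd p) = 1
    rw [OneMemClass.coe_one, bAct_one]
    exact Finsupp.lmapDomain_id _ _
  map_mul' g h := by
    show (Finsupp.lmapDomain (ZMod p) (ZMod p)
        (bAct ((g * h : ↥G) : Equiv.Perm (Vtx p))) : BEnd p) = _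
    have : bAct ((g * h : ↥G) : Equiv.Perm (Vtx p)) =
        bAct (g : Equiv.Perm (Vtx p)) ∘ bAct (h : Equiv.Perm (Vtx p)) := by
      rw [Subgroup.coe_mul]
      exact bAct_mul (hG g.2) (hG h.2)
    refine LinearMap.ext fun v => ?_
    simp only [Finsupp.lmapDomain_apply, this, Finsupp.mapDomain_comp]
    rfl

/-- The representation `χ : F[G] → End(F⟨⟨∂T⟩⟩)` of the group algebra obtained by
linear extension of the action of `G` on the boundary of the tree. -/
noncomputable def chi (p : ℕ) [NeZero p] (G : Subgroup (Equiv.Perm (Vtx p)))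
    (hG : G ≤ treeAut p) : MonoidAlgebra (ZMod p) ↥G →ₐ[ZMod p] BEnd p :=
  MonoidAlgebra.lift (ZMod p) _ ↥G (traRep p G hG)

/-- The tree enveloping algebra `𝔄_G`: the image of the group algebra `F[G]` under `χ`. -/
noncomputable def TEA (p : ℕ) [NeZero p] (G : Subgroup (Equiv.Perm (Vtx p)))
    (hG : G ≤ treeAut p) : Subalgebra (ZMod p) (BEnd p) :=
  (chi p G hG).range

/-- The augmentation ideal of the group algebra `F[G]`. -/
noncomputable def augMA (p : ℕ) [NeZero p] (G : Subgroup (Equiv.Perm (Vtx p))) :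
    Ideal (MonoidAlgebra (ZMod p) ↥G) :=
  RingHom.ker ((MonoidAlgebra.lift (ZMod p) (ZMod p) ↥G) 1)

/-- The induced augmentation ideal `Aug(𝔄_G)`: the image of the augmentation ideal
of `F[G]` in the tree enveloping algebra. -/
noncomputable def augTEA (p : ℕ) [NeZero p] (G : Subgroup (Equiv.Perm (Vtx p)))
    (hG : G ≤ treeAut p) : Ideal ↥(TEA p G hG) :=
  Ideal.map (chi p G hG).rangeRestrict (augMA p G)

/-- The image in the tree enveloping algebra of a group element `g ∈ G`. -/
noncomputable def elt (p : ℕ) [NeZero p] (G : Subgroup (Equiv.Perm (Vtx p)))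
    (hG : G ≤ treeAut p) (g : ↥G) : ↥(TEA p G hG) :=
  (chi p G hG).rangeRestrict (MonoidAlgebra.of (ZMod p) ↥G g)


/-! ### Combinatorial core: infinite descent -/

def rcons (y : Fin p) (ρ : ℕ → Fin p) : ℕ → Fin p :=
  fun n => match n with
  | 0 => y
  | Nat.succ k => ρ k
def rtl (ξ : ℕ → Fin p) : ℕ → Fin p := fun n => ξ (n + 1)
@[simp] theorem rcons_zero (y : Fin p) (ρ : ℕ → Fin p) : rcons y ρ 0 = y := rfl
@[simp] theorem rcons_succ (y : Fin p) (ρ : ℕ → Fin p) (k : ℕ) : rcons y ρ (k + 1) = ρ k := rfl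
@[simp] theorem rtl_rcons (y : Fin p) (ρ : ℕ → Fin p) : rtl (rcons y ρ) = ρ := rfl
theorem rcons_head_rtl (ξ : ℕ → Fin p) : rcons (ξ 0) (rtl ξ) = ξ := by
  funext n; cases n <;> rfl
theorem rcons_inj {y y' : Fin p} {ρ ρ' : ℕ → Fin p} (h : rcons y ρ = rcons y' ρ') :
    y = y' ∧ ρ = ρ' := by
  constructor
  · have := congrFun h 0; simpa using this
  · funext k; have := congrFun h (k+1); simpa using this
theorem rcons_right_injective (y : Fin p) : Function.Injective (rcons y) := by
  intro ρ ρ' h; exact (rcons_inj h).2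
def rA [NeZero p] (m : Fin p) (ξ : ℕ → Fin p) : ℕ → Fin p := rcons (ξ 0 + m) (rtl ξ)
theorem rA_rA [NeZero p] (m k : Fin p) (ξ : ℕ → Fin p) : rA m (rA k ξ) = rA (k + m) ξ := by
  unfold rA; simp [add_assoc]
@[simp] theorem rA_zero [NeZero p] (ξ : ℕ → Fin p) : rA 0 ξ = ξ := by
  unfold rA; simp [rcons_head_rtl]
theorem rA_neg_rA [NeZero p] (m : Fin p) (ξ : ℕ → Fin p) : rA m (rA (-m) ξ) = ξ := by
  rw [rA_rA]; simp
theorem rA_injective [NeZero p] (m : Fin p) : Function.Injective (rA m) := by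
  intro ξ ξ' h
  have := congrArg (rA (-m)) h
  rw [rA_rA, rA_rA] at this; simpa using this
def spine (c : Fin p) : ℕ → Fin p := fun _ => c
@[simp] theorem rcons_spine (c : Fin p) : rcons c (spine c) = spine c := by
  funext n; cases n <;> rfl
structure SecData [NeZero p] (c : Fin p) (γ γ' : (ℕ → Fin p) → (ℕ → Fin p)) where
  m : Fin p → Fin p
  inv1 : ∀ ξ, γ' (γ ξ) = ξ
  inv2 : ∀ ξ, γ (γ' ξ) = ξ
  sec_c : ∀ ρ, γ (rcons c ρ) = rcons c (γ ρ)
  sec : ∀ y, y ≠ c → ∀ ρ, γ (rcons y ρ) = rcons y (rA (m y) ρ)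
  m_ne : ∀ y, y ≠ c → m y ≠ 0
  m_surj : ∀ z : Fin p, z ≠ 0 → ∃ y, y ≠ c ∧ m y = z
variable [NeZero p] {c : Fin p} {γ γ' : (ℕ → Fin p) → (ℕ → Fin p)}
theorem SecData.gamma_injective (S : SecData c γ γ') : Function.Injective γ :=
  Function.LeftInverse.injective S.inv1
def SecData.symm (S : SecData c γ γ') : SecData c γ' γ where
  m := fun y => -(S.m y)
  inv1 := S.inv2
  inv2 := S.inv1
  sec_c := by
    intro ρ
    have h := S.sec_c (γ' ρ)
    rw [S.inv2] at h
    have h2 := congrArg γ' h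
    rw [S.inv1] at h2
    exact h2.symm
  sec := by
    intro y hy ρ
    have h := S.sec y hy (rA (-(S.m y)) ρ)
    rw [rA_neg_rA] at h
    have h2 := congrArg γ' h
    rw [S.inv1] at h2
    exact h2.symm
  m_ne := fun y hy => neg_ne_zero.mpr (S.m_ne y hy)
  m_surj := by
    intro z hz
    obtain ⟨y, hy, hm⟩ := S.m_surj (-z) (neg_ne_zero.mpr hz)
    exact ⟨y, hy, by simp only [hm, neg_neg]⟩
theorem SecData.fix_spine (S : SecData c γ γ') : γ (spine c) = spine c := by
  have h : γ (spine c) = rcons c (γ (spine c)) := by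
    conv_lhs => rw [← rcons_spine c, S.sec_c]
  funext n
  induction n with
  | zero => rw [h]; rfl
  | succ k ih =>
      have h3 : γ (spine c) (k+1) = rcons c (γ (spine c)) (k+1) := by rw [← h]
      rw [h3, rcons_succ, ih]; rfl
noncomputable def Pmap (u : (ℕ → Fin p) →₀ ZMod p) : (ℕ → Fin p) →₀ ZMod p :=
  ∑ y : Fin p, Finsupp.comapDomain (rcons y) u ((rcons_right_injective y).injOn)
omit [NeZero p] in
theorem Pmap_apply (u : (ℕ → Fin p) →₀ ZMod p) (ρ : ℕ → Fin p) :
    Pmap u ρ = ∑ y : Fin p, u (rcons y ρ) := by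
  rw [Pmap, Finsupp.finset_sum_apply]
  rfl
def QQ (c : Fin p) (γ : (ℕ → Fin p) → (ℕ → Fin p)) (u : (ℕ → Fin p) →₀ ZMod p) : Prop :=
  ∀ ζ, u (γ ζ) + ∑ y : Fin p, u (rcons y (rtl ζ)) =
    Finsupp.single (spine c) (1 : ZMod p) ζ

section Descent
variable [Fact p.Prime] {u : (ℕ → Fin p) →₀ ZMod p}

theorem QQ.ne_zero (hQ : QQ c γ u) : u ≠ 0 := by
  intro h0
  have := hQ (spine c)
  rw [h0] at this
  simp only [Finsupp.coe_zero, Pi.zero_apply, Finset.sum_const_zero, add_zero,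
    Finsupp.single_eq_same] at this
  exact one_ne_zero this.symm

/-- Off-spine section relation. -/
theorem QQ.rel1 (S : SecData c γ γ') (hQ : QQ c γ u) {y : Fin p} (hy : y ≠ c) (τ : ℕ → Fin p) :
    u (rcons y (rA (S.m y) τ)) = - Pmap u τ := by
  have h := hQ (rcons y τ)
  rw [S.sec y hy, rtl_rcons] at h
  have hne : rcons y τ ≠ spine c := by
    intro h'
    exact hy (by have := congrFun h' 0; simpa [spine] using this)
  rw [Finsupp.single_eq_of_ne' (fun h' => hne h'.symm)] at h
  rw [← Pmap_apply] at h
  exact eq_neg_of_add_eq_zero_left h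

theorem QQ.rel1' (S : SecData c γ γ') (hQ : QQ c γ u) {y : Fin p} (hy : y ≠ c) (ρ : ℕ → Fin p) :
    u (rcons y ρ) = - Pmap u (rA (-(S.m y)) ρ) := by
  have h := hQ.rel1 S hy (rA (-(S.m y)) ρ)
  rwa [rA_neg_rA] at h

theorem SecData.gammainv_spine_iff (S : SecData c γ γ') {ρ : ℕ → Fin p} :
    γ' ρ = spine c ↔ ρ = spine c := by
  constructor
  · intro h
    have := congrArg γ h
    rw [S.inv2, S.fix_spine] at this
    exact this
  · rintro rfl
    exact S.symm.fix_spine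

theorem rcons_eq_spine_iff {τ : ℕ → Fin p} : rcons c τ = spine c ↔ τ = spine c := by
  constructor
  · intro h
    rw [← rcons_spine c] at h
    exact (rcons_inj h).2
  · rintro rfl
    exact rcons_spine c

/-- On-spine section relation. -/
theorem QQ.rel2 (S : SecData c γ γ') (hQ : QQ c γ u) (ρ : ℕ → Fin p) :
    u (rcons c ρ) = Finsupp.single (spine c) (1 : ZMod p) ρ - Pmap u (γ' ρ) := by
  have h := hQ (rcons c (γ' ρ))
  rw [S.sec_c, S.inv2, rtl_rcons, ← Pmap_apply] at h
  have hs : Finsupp.single (spine c) (1 : ZMod p) (rcons c (γ' ρ)) =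
      Finsupp.single (spine c) (1 : ZMod p) ρ := by
    rcases eq_or_ne ρ (spine c) with rfl | hne
    · rw [S.symm.fix_spine, rcons_spine]
    · rw [Finsupp.single_eq_of_ne' (Ne.symm hne), Finsupp.single_eq_of_ne']
      intro h'
      exact hne (S.gammainv_spine_iff.mp (rcons_eq_spine_iff.mp h'.symm))
  rw [hs] at h
  exact eq_sub_of_add_eq h

theorem sum_erase_reindex (S : SecData c γ γ') (g : Fin p → ZMod p) :
    ∑ y ∈ Finset.univ.erase c, g (-(S.m y)) = ∑ z ∈ Finset.univ.erase 0, g z := by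
  have hmaps : ∀ y ∈ Finset.univ.erase c, -(S.m y) ∈ Finset.univ.erase (0 : Fin p) := by
    intro y hy
    rw [Finset.mem_erase] at hy ⊢
    exact ⟨neg_ne_zero.mpr (S.m_ne y hy.1), Finset.mem_univ _⟩
  have hsurj : ∀ z ∈ Finset.univ.erase (0 : Fin p), ∃ y ∈ Finset.univ.erase c, -(S.m y) = z := by
    intro z hz
    rw [Finset.mem_erase] at hz
    obtain ⟨y, hy, hm⟩ := S.m_surj (-z) (neg_ne_zero.mpr hz.1)
    exact ⟨y, Finset.mem_erase.mpr ⟨hy, Finset.mem_univ _⟩, by rw [hm, neg_neg]⟩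
  have himg : (Finset.univ.erase c).image (fun y => -(S.m y)) = Finset.univ.erase 0 := by
    apply Finset.Subset.antisymm
    · intro z hz
      rw [Finset.mem_image] at hz
      obtain ⟨y, hy, rfl⟩ := hz
      exact hmaps y hy
    · intro z hz
      obtain ⟨y, hy, hm⟩ := hsurj z hz
      exact Finset.mem_image.mpr ⟨y, hy, hm⟩
  have hcard : ((Finset.univ.erase c).image (fun y => -(S.m y))).card =
      (Finset.univ.erase c).card := by
    rw [himg]
    simp [Finset.card_erase_of_mem, Finset.card_univ]
  have hinj := Finset.injOn_of_card_image_eq hcard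
  rw [← himg, Finset.sum_image (fun a ha b hb h => hinj ha hb h)]

theorem QQ.descentQ (S : SecData c γ γ') (hQ : QQ c γ u) : QQ c γ' (Pmap u) := by
  intro ρ
  have h0 : Pmap u ρ = u (rcons c ρ) + ∑ y ∈ Finset.univ.erase c, u (rcons y ρ) := by
    rw [Pmap_apply, ← Finset.add_sum_erase _ _ (Finset.mem_univ c)]
  have h1 : ∑ y ∈ Finset.univ.erase c, u (rcons y ρ)
      = - ∑ y ∈ Finset.univ.erase c, Pmap u (rA (-(S.m y)) ρ) := by
    rw [← Finset.sum_neg_distrib]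
    apply Finset.sum_congr rfl
    intro y hy
    exact hQ.rel1' S (Finset.mem_erase.mp hy).1 ρ
  have h2 : ∑ y ∈ Finset.univ.erase c, Pmap u (rA (-(S.m y)) ρ)
      = ∑ z ∈ Finset.univ.erase 0, Pmap u (rA z ρ) :=
    sum_erase_reindex S (fun z => Pmap u (rA z ρ))
  have h3 : ∑ z ∈ Finset.univ.erase (0 : Fin p), Pmap u (rA z ρ)
      = ∑ z : Fin p, Pmap u (rA z ρ) - Pmap u ρ := by
    have h := Finset.add_sum_erase Finset.univ (fun z => Pmap u (rA z ρ)) (Finset.mem_univ 0)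
    simp only [rA_zero] at h
    linear_combination h
  have h4 : ∑ z : Fin p, Pmap u (rA z ρ) = ∑ y : Fin p, Pmap u (rcons y (rtl ρ)) := by
    apply Fintype.sum_equiv (Equiv.addLeft (ρ 0))
    intro z
    rfl
  have hr2 := hQ.rel2 S ρ
  linear_combination h0 + hr2 + h1 - h2 - h3 - h4

theorem QQ.descentCard (S : SecData c γ γ') (hQ : QQ c γ u) :
    (p - 1) * (Pmap u).support.card ≤ u.support.card := by
  classical
  have hle := Finset.card_le_card_of_injOn
    (fun q : Fin p × (ℕ → Fin p) => rcons q.1 (rA (S.m q.1) q.2))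
    (s := (Finset.univ.erase c) ×ˢ (Pmap u).support) (t := u.support)
    ?_ ?_
  · calc (p - 1) * (Pmap u).support.card
        = ((Finset.univ.erase c) ×ˢ (Pmap u).support).card := by
          rw [Finset.card_product]
          simp [Finset.card_erase_of_mem, Finset.card_univ]
      _ ≤ u.support.card := hle
  · rintro ⟨y, ρ⟩ hq
    rw [Finset.mem_coe, Finset.mem_product, Finset.mem_erase] at hq
    rw [Finset.mem_coe, Finsupp.mem_support_iff]
    rw [hQ.rel1 S hq.1.1 ρ]
    rw [Finsupp.mem_support_iff] at hq
    exact neg_ne_zero.mpr hq.2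
  · rintro ⟨y, ρ⟩ hq ⟨y', ρ'⟩ hq' heq
    simp only at heq
    obtain ⟨h1, h2⟩ := rcons_inj heq
    subst h1
    have := rA_injective _ h2
    simp [this]

theorem noQ (hp : 2 < p) :
    ∀ (n : ℕ) (γ γ' : (ℕ → Fin p) → (ℕ → Fin p)) (u : (ℕ → Fin p) →₀ ZMod p),
      SecData c γ γ' → QQ c γ u → u.support.card ≤ n → False := by
  intro n
  induction n with
  | zero =>
      intro γ γ' u S hQ hcard
      apply hQ.ne_zero
      rw [← Finsupp.support_eq_empty, ← Finset.card_eq_zero]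
      omega
  | succ k ih =>
      intro γ γ' u S hQ hcard
      have h1 := hQ.descentCard S
      have h2 := hQ.descentQ S
      have h3 : (Pmap u).support.Nonempty :=
        Finsupp.support_nonempty_iff.mpr h2.ne_zero
      have h4 : 1 ≤ (Pmap u).support.card := Finset.card_pos.mpr h3
      have h5 : 2 * (Pmap u).support.card ≤ (p - 1) * (Pmap u).support.card :=
        Nat.mul_le_mul_right _ (by omega)
      exact ih γ' γ (Pmap u) S.symm h2 (by omega)

end Descent

open Fin.NatCast


/-! ### Computing the boundary action of the generators -/

theorem applyP_const_one {p : ℕ} (ω : Vtx p) : applyP (fun _ => 1) ω = ω := by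
  induction ω with
  | nil => rfl
  | cons x ω ih => simp [applyP, ih]

theorem applyP_rooted {p : ℕ} (π : Equiv.Perm (Fin p)) (x : Fin p) (ω : Vtx p) :
    applyP (fun τ => if τ = [] then π else 1) (x :: ω) = π x :: ω := by
  rw [applyP]
  have h : (fun τ => if (x :: τ : Vtx p) = [] then π else 1) = (fun _ => (1 : Equiv.Perm (Fin p))) := by
    funext τ; simp
  rw [h, applyP_const_one]
  simp

theorem toPerm_apply {p : ℕ} (f : Vtx p → Equiv.Perm (Fin p)) (ω : Vtx p) :
    toPerm f ω = applyP f ω := rfl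

theorem aAut_nil {p : ℕ} [NeZero p] : aAut p [] = [] := rfl

theorem aAut_cons {p : ℕ} [NeZero p] (x : Fin p) (ω : Vtx p) :
    aAut p (x :: ω) = (x + 1) :: ω := by
  rw [aAut, toPerm_apply, applyP_rooted]
  rfl

theorem rootCycle_pow {p : ℕ} [NeZero p] (n : ℕ) (x : Fin p) :
    ((rootCycle p) ^ n) x = x + (n : Fin p) := by
  induction n with
  | zero => simp
  | succ k ih =>
      rw [pow_succ', Equiv.Perm.mul_apply, ih]
      show (Equiv.addRight 1) _ = _
      rw [Equiv.coe_addRight]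
      push_cast
      rw [add_assoc]

theorem dirPort_nil {p : ℕ} [NeZero p] (hp1 : 1 < p) (c : Fin p) (e : Fin (p-1) → ZMod p) :
    dirPort hp1 c e [] = 1 := rfl

theorem dirPort_cons_c {p : ℕ} [NeZero p] (hp1 : 1 < p) (c : Fin p) (e : Fin (p-1) → ZMod p)
    (τ : Vtx p) : dirPort hp1 c e (c :: τ) = dirPort hp1 c e τ := by
  cases τ with
  | nil => simp [dirPort]
  | cons y ω => simp [dirPort]

theorem dirPort_cons_ne {p : ℕ} [NeZero p] (hp1 : 1 < p) (c : Fin p) (e : Fin (p-1) → ZMod p)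
    {x : Fin p} (hx : x ≠ c) (τ : Vtx p) :
    dirPort hp1 c e (x :: τ) =
      if τ = [] then rootCycle p ^ (e (offIdx hp1 (x - c))).val else 1 := by
  cases τ with
  | nil => simp [dirPort, hx]
  | cons y ω => simp [dirPort, hx]

theorem dirAut_nil {p : ℕ} [NeZero p] (hp1 : 1 < p) (c : Fin p) (e : Fin (p-1) → ZMod p) :
    dirAut hp1 c e [] = [] := rfl

theorem dirAut_cons_c {p : ℕ} [NeZero p] (hp1 : 1 < p) (c : Fin p) (e : Fin (p-1) → ZMod p)
    (ω : Vtx p) : dirAut hp1 c e (c :: ω) = c :: dirAut hp1 c e ω := by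
  rw [dirAut, toPerm_apply, applyP]
  have h1 : dirPort hp1 c e [] c = c := rfl
  rw [h1]
  have h2 : (fun τ => dirPort hp1 c e (c :: τ)) = dirPort hp1 c e := by
    funext τ; exact dirPort_cons_c hp1 c e τ
  rw [h2]
  rfl

theorem dirAut_cons_ne {p : ℕ} [NeZero p] (hp1 : 1 < p) (c : Fin p) (e : Fin (p-1) → ZMod p)
    {x : Fin p} (hx : x ≠ c) (ω : Vtx p) :
    dirAut hp1 c e (x :: ω) =
      x :: applyP (fun τ => if τ = [] then rootCycle p ^ (e (offIdx hp1 (x - c))).val else 1) ω := by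
  rw [dirAut, toPerm_apply, applyP]
  have h1 : dirPort hp1 c e [] x = x := rfl
  rw [h1]
  have h2 : (fun τ => dirPort hp1 c e (x :: τ)) =
      (fun τ => if τ = [] then rootCycle p ^ (e (offIdx hp1 (x - c))).val else 1) := by
    funext τ; exact dirPort_cons_ne hp1 c e hx τ
  rw [h2]

theorem rayTake_cons {p : ℕ} (ξ : ℕ → Fin p) (n : ℕ) :
    rayTake ξ (n + 1) = ξ 0 :: rayTake (rtl ξ) n := by
  rw [rayTake, List.ofFn_succ]
  rfl

theorem rayTake_rcons {p : ℕ} (y : Fin p) (ρ : ℕ → Fin p) (n : ℕ) :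
    rayTake (rcons y ρ) (n + 1) = y :: rayTake ρ n := by
  rw [rayTake_cons]
  rfl

theorem rayTake_getD {p : ℕ} [NeZero p] (ξ : ℕ → Fin p) {n m : ℕ} (h : n < m) :

    (rayTake ξ m).getD n 0 = ξ n := by
  rw [List.getD_eq_getElem?_getD]
  have hlen : n < (rayTake ξ m).length := by simp [rayTake, h]
  rw [List.getElem?_eq_getElem hlen]
  simp [rayTake]


theorem bAct_aAut {p : ℕ} [NeZero p] : bAct (aAut p) = rA (1 : Fin p) := by
  funext ξ n
  cases n with
  | zero =>
      show (aAut p (rayTake ξ 1)).getD 0 0 = rA 1 ξ 0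
      rw [rayTake_cons, rayTake]
      simp only [List.ofFn_zero]
      rw [aAut_cons]
      rfl
  | succ k =>
      show (aAut p (rayTake ξ (k + 2))).getD (k+1) 0 = rA 1 ξ (k+1)
      rw [rayTake_cons, aAut_cons, List.getD_cons_succ,
        rayTake_getD (rtl ξ) (Nat.lt_succ_self k)]
      rfl

theorem bAct_dirAut_c {p : ℕ} [NeZero p] (hp1 : 1 < p) (c : Fin p) (e : Fin (p-1) → ZMod p)
    (ρ : ℕ → Fin p) :
    bAct (dirAut hp1 c e) (rcons c ρ) = rcons c (bAct (dirAut hp1 c e) ρ) := by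
  funext n
  cases n with
  | zero =>
      show (dirAut hp1 c e (rayTake (rcons c ρ) 1)).getD 0 0 = c
      rw [rayTake_rcons, rayTake]
      simp only [List.ofFn_zero]
      rw [dirAut_cons_c, dirAut_nil]
      rfl
  | succ k =>
      show (dirAut hp1 c e (rayTake (rcons c ρ) (k + 2))).getD (k+1) 0
        = bAct (dirAut hp1 c e) ρ k
      rw [rayTake_rcons, dirAut_cons_c, List.getD_cons_succ]
      rfl

theorem bAct_dirAut_ne {p : ℕ} [NeZero p] (hp1 : 1 < p) (c : Fin p) (e : Fin (p-1) → ZMod p)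
    {x : Fin p} (hx : x ≠ c) (ρ : ℕ → Fin p) :
    bAct (dirAut hp1 c e) (rcons x ρ) =
      rcons x (rA (((e (offIdx hp1 (x - c))).val : ℕ) : Fin p) ρ) := by
  funext n
  cases n with
  | zero =>
      show (dirAut hp1 c e (rayTake (rcons x ρ) 1)).getD 0 0 = x
      rw [rayTake_rcons, rayTake]
      simp only [List.ofFn_zero]
      rw [dirAut_cons_ne hp1 c e hx]
      rfl
  | succ k =>
      cases k with
      | zero =>
          show (dirAut hp1 c e (rayTake (rcons x ρ) 2)).getD 1 0
            = ρ 0 + ((e (offIdx hp1 (x - c))).val : Fin p)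
          rw [rayTake_rcons, rayTake_cons, rayTake]
          simp only [List.ofFn_zero]
          rw [dirAut_cons_ne hp1 c e hx, applyP_rooted, rootCycle_pow]
          rfl
      | succ j =>
          show (dirAut hp1 c e (rayTake (rcons x ρ) (j + 3))).getD (j+2) 0
            = rcons x (rA (((e (offIdx hp1 (x - c))).val : ℕ) : Fin p) ρ) (j+2)
          rw [rayTake_rcons, rayTake_cons, dirAut_cons_ne hp1 c e hx, applyP_rooted,
            List.getD_cons_succ, List.getD_cons_succ, rayTake_getD (rtl ρ) (Nat.lt_succ_self j)]
          rfl

theorem bAct_leftInv {p : ℕ} [NeZero p] {g : Equiv.Perm (Vtx p)} (hg : g ∈ treeAut p)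
    (ξ : ℕ → Fin p) : bAct g⁻¹ (bAct g ξ) = ξ := by
  have h := bAct_mul ((treeAut p).inv_mem hg) hg
  rw [inv_mul_cancel, bAct_one] at h
  exact congrFun h.symm ξ

theorem bAct_rightInv {p : ℕ} [NeZero p] {g : Equiv.Perm (Vtx p)} (hg : g ∈ treeAut p)
    (ξ : ℕ → Fin p) : bAct g (bAct g⁻¹ ξ) = ξ := by
  have h := bAct_mul hg ((treeAut p).inv_mem hg)
  rw [mul_inv_cancel, bAct_one] at h
  exact congrFun h.symm ξ

/-- The section data attached to a directed generator whose defining-vector values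
are exactly the non-zero residues. -/
noncomputable def dirSecData {p : ℕ} [NeZero p] [Fact p.Prime] (hp1 : 1 < p) (c : Fin p)
    (e : Fin (p-1) → ZMod p)
    (hnz : ∀ k, e k ≠ 0) (hsurj : ∀ m : ZMod p, m ≠ 0 → ∃ k, e k = m) :
    SecData c (bAct (dirAut hp1 c e)) (bAct (dirAut hp1 c e)⁻¹) where
  m := fun y => (((e (offIdx hp1 (y - c))).val : ℕ) : Fin p)
  inv1 := bAct_leftInv (toPerm_mem_treeAut _)
  inv2 := bAct_rightInv (toPerm_mem_treeAut _)
  sec_c := bAct_dirAut_c hp1 c e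
  sec := fun y hy ρ => bAct_dirAut_ne hp1 c e hy ρ
  m_ne := by
    intro y hy
    have h1 : e (offIdx hp1 (y - c)) ≠ 0 := hnz _
    have h2 : (e (offIdx hp1 (y - c))).val < p := ZMod.val_lt _
    have h3 : (e (offIdx hp1 (y - c))).val ≠ 0 := fun h => h1 ((ZMod.val_eq_zero _).mp h)
    intro hcon
    rw [Fin.ext_iff, Fin.val_natCast] at hcon
    rw [Nat.mod_eq_of_lt h2] at hcon
    exact h3 (by simpa using hcon)
  m_surj := by
    intro z hz
    have hzval : z.val ≠ 0 := by
      intro h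
      apply hz
      rw [Fin.ext_iff, h]
      simp
    have hzlt : z.val < p := z.isLt
    have hw : ((z.val : ℕ) : ZMod p) ≠ 0 := by
      rw [Ne, ZMod.natCast_eq_zero_iff]
      intro hdvd
      exact hzval (Nat.eq_zero_of_dvd_of_lt hdvd hzlt)
    obtain ⟨k, hk⟩ := hsurj _ hw
    have hkv : k.val + 1 < p := by
      have := k.isLt
      omega
    refine ⟨c + ⟨k.val + 1, hkv⟩, ?_, ?_⟩
    · intro h
      have h2 : (⟨k.val + 1, hkv⟩ : Fin p) = 0 := by
        have h3 := congrArg (fun t => t - c) h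
        simpa [add_sub_cancel_left] using h3
      have h4 := congrArg Fin.val h2
      simp at h4
    · show ((e (offIdx hp1 (c + ⟨k.val + 1, hkv⟩ - c))).val : Fin p) = z
      rw [add_sub_cancel_left]
      have hoff : offIdx hp1 (⟨k.val + 1, hkv⟩ : Fin p) = k := by
        rw [Fin.ext_iff]
        rfl
      rw [hoff, hk]
      rw [ZMod.val_natCast_of_lt hzlt]
      exact Fin.cast_val_eq_self z



theorem geom_pow_eq {p : ℕ} [Fact p.Prime] {A : Type*} [Ring A] [Algebra (ZMod p) A] (t : A) :
    (t - 1) ^ (p - 1) = ∑ i ∈ Finset.range p, t ^ i := by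
  have hp : 1 < p := (Fact.out : p.Prime).one_lt
  have hpoly : ((Polynomial.X : Polynomial (ZMod p)) - 1) ^ (p - 1)
      = ∑ i ∈ Finset.range p, Polynomial.X ^ i := by
    have h1 : (Polynomial.X - 1 : Polynomial (ZMod p)) ≠ 0 := by
      intro h
      rw [sub_eq_zero] at h
      exact Polynomial.X_ne_C (1 : ZMod p) (by rw [h, Polynomial.C_1])
    apply mul_right_cancel₀ h1
    rw [geom_sum_mul, ← pow_succ]
    have h2 : p - 1 + 1 = p := by omega
    rw [h2, sub_pow_char, one_pow]
  have h := congrArg (Polynomial.aeval t) hpoly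
  simpa using h

theorem lmapDomain_rA_pow {p : ℕ} [NeZero p] (i : ℕ) :
    (Finsupp.lmapDomain (ZMod p) (ZMod p) (rA (1 : Fin p))) ^ i
      = Finsupp.lmapDomain (ZMod p) (ZMod p) (rA ((i : ℕ) : Fin p)) := by
  induction i with
  | zero =>
      rw [pow_zero]
      apply LinearMap.ext
      intro v
      have h : rA ((0 : ℕ) : Fin p) = (id : (ℕ → Fin p) → (ℕ → Fin p)) := by
        funext ξ
        simp [Nat.cast_zero]
      simp only [Finsupp.lmapDomain_apply, h, Finsupp.mapDomain_id]
      rfl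
  | succ k ih =>
      rw [pow_succ, ih]
      apply LinearMap.ext
      intro v
      simp only [Module.End.mul_apply, Finsupp.lmapDomain_apply]
      rw [← Finsupp.mapDomain_comp]
      congr 1
      funext ξ
      show rA ((k : ℕ) : Fin p) (rA 1 ξ) = rA (((k+1 : ℕ)) : Fin p) ξ
      rw [rA_rA]
      congr 1
      push_cast
      rw [add_comm]


theorem stmt17 (p : ℕ) (hp : p.Prime) (hodd : Odd p) [Fact p.Prime] [NeZero p] (hp1 : 1 < p)
    (D : SpinalData p) (hji : JustInfinite (D.grp hp1)) (hr : D.r 0 ≠ 0)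
    (hnz : ∀ k, D.e 0 ⟨0, Nat.pos_of_ne_zero hr⟩ k ≠ 0)
    (hsurj : ∀ m : ZMod p, m ≠ 0 → ∃ k, D.e 0 ⟨0, Nat.pos_of_ne_zero hr⟩ k = m) :
    ¬ IsUnit (1 +
      elt p (D.grp hp1) (grp_le_treeAut D hp1)
          ⟨D.gen hp1 0 ⟨0, Nat.pos_of_ne_zero hr⟩,
            gen_mem_grp D hp1 0 ⟨0, Nat.pos_of_ne_zero hr⟩⟩ *
        (elt p (D.grp hp1) (grp_le_treeAut D hp1)
          ⟨aAut p, aAut_mem_grp D hp1⟩ - 1) ^ (p - 1)) := by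
  intro hU
  have hp2 : 2 < p := by
    have h1 := hp.two_le
    have h2 := Nat.odd_iff.mp hodd
    omega
  set i0 : Fin (D.r 0) := ⟨0, Nat.pos_of_ne_zero hr⟩ with hi0
  set c : Fin p := pathLetter 0 with hc
  set g : Equiv.Perm (Vtx p) := D.gen hp1 0 i0 with hgdef
  set β : (ℕ → Fin p) → (ℕ → Fin p) := bAct g with hβ
  set β' : (ℕ → Fin p) → (ℕ → Fin p) := bAct g⁻¹ with hβ'
  have SD : SecData c β β' := dirSecData hp1 c (D.e 0 i0) hnz hsurj
  set Tb : Module.End (ZMod p) ((ℕ → Fin p) →₀ ZMod p) :=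
    Finsupp.lmapDomain (ZMod p) (ZMod p) β with hTb
  set Ta : Module.End (ZMod p) ((ℕ → Fin p) →₀ ZMod p) :=
    Finsupp.lmapDomain (ZMod p) (ZMod p) (rA (1 : Fin p)) with hTa
  have hval_b : (Subalgebra.val _)
      (elt p (D.grp hp1) (grp_le_treeAut D hp1) ⟨g, gen_mem_grp D hp1 0 i0⟩)
        = Tb := by
    show chi p (D.grp hp1) (grp_le_treeAut D hp1)
      (MonoidAlgebra.of (ZMod p) _ ⟨g, gen_mem_grp D hp1 0 i0⟩) = Tb
    rw [chi, MonoidAlgebra.lift_of]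
    rfl
  have hval_a : (Subalgebra.val _)
      (elt p (D.grp hp1) (grp_le_treeAut D hp1) ⟨aAut p, aAut_mem_grp D hp1⟩)
        = Ta := by
    show chi p (D.grp hp1) (grp_le_treeAut D hp1)
      (MonoidAlgebra.of (ZMod p) _ ⟨aAut p, aAut_mem_grp D hp1⟩) = Ta
    rw [chi, MonoidAlgebra.lift_of]
    show Finsupp.lmapDomain (ZMod p) (ZMod p) (bAct (aAut p)) = Ta
    rw [bAct_aAut, hTa]
  have hU2 : IsUnit ((1 : Module.End (ZMod p) ((ℕ → Fin p) →₀ ZMod p))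
      + Tb * (Ta - 1) ^ (p - 1)) := by
    have h := hU.map (Subalgebra.val (TEA p (D.grp hp1) (grp_le_treeAut D hp1)))
    rw [map_add, map_one, map_mul, map_pow, map_sub, map_one, hval_b, hval_a] at h
    exact h
  obtain ⟨u, hu⟩ := hU2
  set δ : (ℕ → Fin p) →₀ ZMod p := Finsupp.single (spine c) (1 : ZMod p) with hδ
  set v : (ℕ → Fin p) →₀ ZMod p := (↑u⁻¹ : Module.End (ZMod p) ((ℕ → Fin p) →₀ ZMod p)) δ
    with hv
  have hXv : ((1 : Module.End (ZMod p) ((ℕ → Fin p) →₀ ZMod p))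
      + Tb * (Ta - 1) ^ (p - 1)) v = δ := by
    have h1 : ((1 : Module.End (ZMod p) ((ℕ → Fin p) →₀ ZMod p))
        + Tb * (Ta - 1) ^ (p - 1)) * (↑u⁻¹ : Module.End (ZMod p) ((ℕ → Fin p) →₀ ZMod p))
          = 1 := by
      rw [← hu, Units.mul_inv]
    calc ((1 : Module.End (ZMod p) ((ℕ → Fin p) →₀ ZMod p)) + Tb * (Ta - 1) ^ (p - 1)) v
        = (((1 : Module.End (ZMod p) ((ℕ → Fin p) →₀ ZMod p)) + Tb * (Ta - 1) ^ (p - 1))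
            * (↑u⁻¹ : Module.End (ZMod p) ((ℕ → Fin p) →₀ ZMod p))) δ := rfl
      _ = δ := by rw [h1]; rfl
  have hgeom := geom_pow_eq (p := p) Ta
  rw [hgeom] at hXv
  have hβinj : Function.Injective β := SD.gamma_injective
  have hQ : QQ c β v := by
    intro ζ
    have h := DFunLike.congr_fun hXv (β ζ)
    have hL : (((1 : Module.End (ZMod p) ((ℕ → Fin p) →₀ ZMod p))
        + Tb * ∑ i ∈ Finset.range p, Ta ^ i) v) (β ζ)
        = v (β ζ) + ∑ y : Fin p, v (rcons y (rtl ζ)) := by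
      rw [LinearMap.add_apply, Module.End.one_apply, Module.End.mul_apply]
      rw [Finsupp.add_apply]
      congr 1
      rw [hTb, Finsupp.lmapDomain_apply, Finsupp.mapDomain_apply hβinj]
      have hsum : ((∑ i ∈ Finset.range p, Ta ^ i) v) ζ
          = ∑ i ∈ Finset.range p, v (rA (-((i : ℕ) : Fin p)) ζ) := by
        rw [LinearMap.sum_apply, Finsupp.finset_sum_apply]
        apply Finset.sum_congr rfl
        intro i _
        rw [hTa, lmapDomain_rA_pow, Finsupp.lmapDomain_apply]
        conv_lhs => rw [← rA_neg_rA ((i : ℕ) : Fin p) ζ]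
        rw [Finsupp.mapDomain_apply (rA_injective _)]
      rw [hsum]
      have hstep : ∑ i ∈ Finset.range p, v (rA (-((i : ℕ) : Fin p)) ζ)
          = ∑ j : Fin p, v (rA (-j) ζ) := by
        rw [← Fin.sum_univ_eq_sum_range (fun i => v (rA (-((i : ℕ) : Fin p)) ζ)) p]
        apply Finset.sum_congr rfl
        intro j _
        rw [Fin.cast_val_eq_self]
      rw [hstep]
      apply Fintype.sum_equiv (Equiv.subLeft (ζ 0))
      intro j
      show v (rA (-j) ζ) = v (rcons (ζ 0 - j) (rtl ζ))
      congr 1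
      show rcons (ζ 0 + -j) (rtl ζ) = rcons (ζ 0 - j) (rtl ζ)
      rw [sub_eq_add_neg]
    have hR : δ (β ζ) = δ ζ := by
      rcases eq_or_ne ζ (spine c) with rfl | hne
      · rw [SD.fix_spine]
      · rw [hδ, Finsupp.single_eq_of_ne' (Ne.symm hne), Finsupp.single_eq_of_ne']
        intro hcon
        exact hne ((SD.symm.gammainv_spine_iff).mp hcon.symm)
    rw [hL, hR] at h
    exact h
  exact noQ hp2 v.support.card β β' v SD hQ le_rfl

end GMS
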